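/- (Fitting's Lemma for finite groups.) Let G be a finite group and φ an endomorphism of G. Then there is a natural number n such that ker(φⁿ) = ker(φⁿ⁺ⁱ) and φⁿ(G) = φⁿ⁺ⁱ(G) for every i ≥ 0, and, setting K = ker(φⁿ) and H = φⁿ(G): (1) K is a normal subgroup of G, H ∩ K = {1}, and G = H·K (so G is the internal semidirect product of K by H); (2) the restriction of φ to K is nilpotent (indeed φⁿ(K) = {1}); (3) φ maps H into H and the restriction of φ to H is an automorphism of H. -/

import Mathlib

theorem fitting_lemma_finite_groups
    {G : Type*} [Group G] [Finite G] (φ : Monoid.End G) :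
    ∃ n : ℕ,
      (∀ i : ℕ, MonoidHom.ker (φ ^ n) = MonoidHom.ker (φ ^ (n + i)) ∧
        MonoidHom.range (φ ^ n) = MonoidHom.range (φ ^ (n + i))) ∧
      (MonoidHom.ker (φ ^ n)).Normal ∧
      (MonoidHom.range (φ ^ n) ⊓ MonoidHom.ker (φ ^ n) = ⊥) ∧
      (∀ g : G, ∃ h ∈ MonoidHom.range (φ ^ n), ∃ k ∈ MonoidHom.ker (φ ^ n),
        g = h * k) ∧
      (∀ x ∈ MonoidHom.ker (φ ^ n), φ x ∈ MonoidHom.ker (φ ^ n)) ∧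
      (∀ x ∈ MonoidHom.ker (φ ^ n), (φ ^ n) x = 1) ∧
      (∀ x ∈ MonoidHom.range (φ ^ n), φ x ∈ MonoidHom.range (φ ^ n)) ∧
      Set.BijOn φ (MonoidHom.range (φ ^ n) : Set G)
        (MonoidHom.range (φ ^ n) : Set G) := by
  classical
  set f : ℕ → ℕ := fun m => Nat.card (MonoidHom.range (φ ^ m)) with hf
  obtain ⟨n, hn⟩ : ∃ n : ℕ, ∀ m : ℕ, f n ≤ f m := by
    have hS : (Set.range f).Nonempty := ⟨f 0, 0, rfl⟩
    obtain ⟨n, hn⟩ := Nat.sInf_mem hS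
    exact ⟨n, fun m => hn ▸ Nat.sInf_le ⟨m, rfl⟩⟩
  -- basic application identities
  have happ : ∀ (a b : ℕ) (x : G), (φ ^ (a + b)) x = (φ ^ a) ((φ ^ b) x) := by
    intro a b x
    rw [pow_add]; rfl
  have hrle : ∀ i, MonoidHom.range (φ ^ (n + i)) ≤ MonoidHom.range (φ ^ n) := by
    rintro i _ ⟨x, rfl⟩
    exact ⟨(φ ^ i) x, (happ n i x).symm⟩
  have hrange : ∀ i, MonoidHom.range (φ ^ n) = MonoidHom.range (φ ^ (n + i)) := by
    intro i
    exact (Subgroup.eq_of_le_of_card_ge (hrle i) (hn (n + i))).symm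
  have hcard : ∀ m : ℕ, Nat.card (MonoidHom.ker (φ ^ m)) * f m = Nat.card G := by
    intro m
    have h1 := Subgroup.card_eq_card_quotient_mul_card_subgroup (MonoidHom.ker (φ ^ m))
    have h2 : Nat.card (G ⧸ MonoidHom.ker (φ ^ m)) = f m :=
      Nat.card_congr (QuotientGroup.quotientKerEquivRange (φ ^ m)).toEquiv
    rw [h1, h2, mul_comm]
  have hkle : ∀ i, MonoidHom.ker (φ ^ n) ≤ MonoidHom.ker (φ ^ (n + i)) := by
    intro i x hx
    have : (φ ^ (i + n)) x = 1 := by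
      rw [happ i n x, show (φ ^ n) x = 1 from hx]; exact map_one _
    rwa [add_comm] at this
  have hker : ∀ i, MonoidHom.ker (φ ^ n) = MonoidHom.ker (φ ^ (n + i)) := by
    intro i
    have hc : Nat.card (MonoidHom.ker (φ ^ (n + i))) ≤ Nat.card (MonoidHom.ker (φ ^ n)) := by
      have h1 := hcard n
      have h2 := hcard (n + i)
      have hfe : f (n + i) = f n := by rw [hf]; simp only; rw [← hrange i]
      rw [hfe] at h2
      have hpos : 0 < f n := Nat.card_pos
      exact Nat.le_of_mul_le_mul_right (by rw [h1, h2]) hpos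
    exact (Subgroup.eq_of_le_of_card_ge (hkle i) hc)
  have hbot : MonoidHom.range (φ ^ n) ⊓ MonoidHom.ker (φ ^ n) = ⊥ := by
    rw [eq_bot_iff]
    rintro x ⟨⟨y, rfl⟩, hk⟩
    have hy : y ∈ MonoidHom.ker (φ ^ (n + n)) := by
      show (φ ^ (n + n)) y = 1; rw [happ]; exact hk
    rw [← hker n] at hy
    rw [Subgroup.mem_bot]; exact hy
  refine ⟨n, fun i => ⟨hker i, hrange i⟩, MonoidHom.normal_ker _, hbot, ?_, ?_, ?_, ?_, ?_⟩
  · -- G = H * K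
    intro g
    have hg : (φ ^ n) g ∈ MonoidHom.range (φ ^ (n + n)) := by
      rw [← hrange n]; exact ⟨g, rfl⟩
    obtain ⟨y, hy⟩ := hg
    refine ⟨(φ ^ n) y, ⟨y, rfl⟩, ((φ ^ n) y)⁻¹ * g, ?_, by group⟩
    show (φ ^ n) (((φ ^ n) y)⁻¹ * g) = 1
    rw [map_mul, map_inv, ← happ, show (φ ^ (n + n)) y = (φ ^ n) g from hy]
    group
  · -- φ maps K to K
    intro x hx
    have h1 : x ∈ MonoidHom.ker (φ ^ (n + 1)) := (hker 1) ▸ hx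
    change (φ ^ (n + 1)) x = 1 at h1; show (φ ^ n) (φ x) = 1
    have h2 := (happ n 1 x).symm.trans h1
    simpa using h2
  · intro x hx; exact hx
  · -- φ maps H to H
    rintro _ ⟨y, rfl⟩
    rw [hrange 1]
    exact ⟨y, by rw [add_comm]; exact happ 1 n y⟩
  · -- BijOn
    refine ⟨?_, ?_, ?_⟩
    · rintro _ ⟨y, rfl⟩
      rw [SetLike.mem_coe, hrange 1]
      exact ⟨y, by rw [add_comm]; exact happ 1 n y⟩
    · rintro _ ⟨a, rfl⟩ _ ⟨b, rfl⟩ hab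
      set u := (φ ^ n) a * ((φ ^ n) b)⁻¹ with hu
      have huH : u ∈ MonoidHom.range (φ ^ n) := ⟨a * b⁻¹, by show (φ ^ n) (a * b⁻¹) = (φ ^ n) a * ((φ ^ n) b)⁻¹; rw [map_mul, map_inv]⟩
      have huK : u ∈ MonoidHom.ker (φ ^ n) := by
        have h1 : u ∈ MonoidHom.ker (φ ^ (n + 1)) := by
          show (φ ^ (n + 1)) u = 1; rw [happ n 1]
          have h2 : φ u = 1 := by
            rw [hu, map_mul, map_inv, show φ ((φ ^ n) a) = φ ((φ ^ n) b) from hab]; group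
          simp [h2]
        rwa [← hker 1] at h1
      have : u ∈ (⊥ : Subgroup G) := hbot ▸ Subgroup.mem_inf.mpr ⟨huH, huK⟩
      rw [Subgroup.mem_bot] at this
      exact mul_inv_eq_one.mp this
    · rintro x hx
      rw [SetLike.mem_coe, hrange 1] at hx
      obtain ⟨y, hy⟩ := hx
      refine ⟨(φ ^ n) y, ⟨y, rfl⟩, ?_⟩
      rw [← hy, add_comm]
      exact (happ 1 n y).symm
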